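/- Let k > 8 be an integer such that k^{1/4} is a natural number. Let (G,𝒳,k) be a Yes-instance of EDP where G is a split graph, and let 𝒫 be a minimum solution of (G,𝒳,k). Then every path P ∈ 𝒫 satisfies |E(P)| < 4√k + 4. -/

import Mathlib

open SimpleGraph Finset

/-- A family of walks in `G` connecting the terminal pairs `X`. -/
abbrev WalkFamily {V : Type*} (G : SimpleGraph V) {ι : Type*} (X : ι → V × V) :=
  ∀ i : ι, G.Walk (X i).1 (X i).2

/-- The walks in the family are pairwise edge-disjoint. -/
def PairwiseEdgeDisjoint {V : Type*} (G : SimpleGraph V) {ι : Type*} (X : ι → V × V)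
    (P : WalkFamily G X) : Prop :=
  ∀ i j : ι, i ≠ j → ∀ e : Sym2 V, e ∈ (P i).edges → e ∉ (P j).edges

/-- A solution of the Edge-Disjoint Paths (EDP) instance `(G, X)`: a family of paths
connecting the terminal pairs that are pairwise edge-disjoint. -/
def IsEDPSolution {V : Type*} (G : SimpleGraph V) {ι : Type*} (X : ι → V × V)
    (P : WalkFamily G X) : Prop :=
  (∀ i, (P i).IsPath) ∧ PairwiseEdgeDisjoint G X P

/-- `(G, X)` is a Yes-instance of EDP. -/
def EDPYes {V : Type*} (G : SimpleGraph V) {ι : Type*} (X : ι → V × V) : Prop :=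
  ∃ P : WalkFamily G X, IsEDPSolution G X P

/-- A minimum solution of the EDP instance `(G, X)`: a solution minimizing the total
number of edges of the paths. -/
def IsMinEDPSolution {V : Type*} (G : SimpleGraph V) {ι : Type*} [Fintype ι]
    (X : ι → V × V) (P : WalkFamily G X) : Prop :=
  IsEDPSolution G X P ∧
    ∀ Q : WalkFamily G X, IsEDPSolution G X Q →
      ∑ i, (P i).length ≤ ∑ i, (Q i).length

/-- `(C, I)` is a split partition of `G`: `V(G)` is the disjoint union of `C` and `I`,
`C` induces a clique, and `I` is an independent set. -/
def IsSplitPartition {V : Type*} (G : SimpleGraph V) (C I : Finset V) : Prop :=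
  (∀ x : V, x ∈ C ∨ x ∈ I) ∧ (∀ x : V, ¬ (x ∈ C ∧ x ∈ I)) ∧
  (∀ x ∈ C, ∀ y ∈ C, x ≠ y → G.Adj x y) ∧ (∀ x ∈ I, ∀ y ∈ I, ¬ G.Adj x y)

namespace EDPAux

variable {V : Type*} {G : SimpleGraph V}

/-- Take the first `n` edges of a walk. -/
def wtake {s t : V} : (W : G.Walk s t) → (n : ℕ) → G.Walk s (W.getVert n)
  | .nil, _ => .nil
  | .cons _ _, 0 => .nil
  | .cons h p, (n+1) => .cons h (wtake p n)

/-- Drop the first `n` edges of a walk. -/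
def wdrop {s t : V} : (W : G.Walk s t) → (n : ℕ) → G.Walk (W.getVert n) t
  | .nil, _ => .nil
  | .cons h p, 0 => .cons h p
  | .cons _ p, (n+1) => wdrop p n

lemma wtake_append_wdrop {s t : V} (W : G.Walk s t) (n : ℕ) :
    (wtake W n).append (wdrop W n) = W := by
  induction W generalizing n with
  | nil => cases n <;> rfl
  | cons h p ih =>
    cases n with
    | zero => rfl
    | succ n => exact congrArg (SimpleGraph.Walk.cons h) (ih n)

lemma getVert_wdrop {s t : V} (W : G.Walk s t) (n m : ℕ) :
    (wdrop W n).getVert m = W.getVert (n + m) := by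
  induction W generalizing n with
  | nil => simp [wdrop, SimpleGraph.Walk.getVert]
  | cons h p ih =>
    cases n with
    | zero => rw [Nat.zero_add]; rfl
    | succ n =>
      simp only [wdrop, ih]
      have : n + 1 + m = (n + m) + 1 := by omega
      rw [this]; exact ih n

lemma getVert_wtake {s t : V} (W : G.Walk s t) {n m : ℕ} (h : m ≤ n) :
    (wtake W n).getVert m = W.getVert m := by
  induction W generalizing n m with
  | nil => simp [wtake]
  | cons hadj p ih =>
    cases n with
    | zero => interval_cases m; rfl
    | succ n =>
      cases m with
      | zero => simp [wtake]
      | succ m =>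
        simp only [wtake, SimpleGraph.Walk.getVert_cons_succ]
        exact ih (by omega)

lemma length_wtake {s t : V} (W : G.Walk s t) {n : ℕ} (h : n ≤ W.length) :
    (wtake W n).length = n := by
  induction W generalizing n with
  | nil => simp at h; simp [h, wtake]
  | cons hadj p ih =>
    cases n with
    | zero => rfl
    | succ n =>
      simp only [wtake, SimpleGraph.Walk.length_cons] at h ⊢
      exact congrArg (· + 1) (ih (n := n) (by omega))

lemma length_wdrop {s t : V} (W : G.Walk s t) {n : ℕ} (h : n ≤ W.length) :
    (wdrop W n).length = W.length - n := by
  induction W generalizing n with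
  | nil => simp at h; simp [h, wdrop]
  | cons hadj p ih =>
    cases n with
    | zero => rfl
    | succ n =>
      simp only [wdrop, SimpleGraph.Walk.length_cons] at h ⊢
      exact (ih (n := n) (by omega)).trans (by omega)

lemma support_wtake {s t : V} (W : G.Walk s t) {n : ℕ} (h : n ≤ W.length) :
    (wtake W n).support = W.support.take (n + 1) := by
  induction W generalizing n with
  | nil => simp at h; simp [h, wtake]
  | cons hadj p ih =>
    cases n with
    | zero =>
      simp [wtake, SimpleGraph.Walk.support_cons]; rfl
    | succ n =>
      simp only [wtake, SimpleGraph.Walk.support_cons, SimpleGraph.Walk.length_cons] at h ⊢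
      exact congrArg (List.cons _) (ih (by omega))

lemma support_wdrop {s t : V} (W : G.Walk s t) {n : ℕ} (h : n ≤ W.length) :
    (wdrop W n).support = W.support.drop n := by
  induction W generalizing n with
  | nil => simp at h; simp [h, wdrop]
  | cons hadj p ih =>
    cases n with
    | zero => rfl
    | succ n =>
      simp only [wdrop, SimpleGraph.Walk.support_cons, SimpleGraph.Walk.length_cons] at h ⊢
      exact ih (by omega)

lemma support_map_getVert {s t : V} (W : G.Walk s t) :
    W.support = (List.range (W.length + 1)).map W.getVert := by
  induction W with
  | nil => simp [SimpleGraph.Walk.getVert]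
  | cons hadj p ih =>
    rw [SimpleGraph.Walk.support_cons, ih, SimpleGraph.Walk.length_cons,
      ]
    conv_rhs => rw [List.range_succ_eq_map, List.map_cons, List.map_map]
    rfl

lemma getVert_mem_support {s t : V} (W : G.Walk s t) {n : ℕ} (h : n ≤ W.length) :
    W.getVert n ∈ W.support := by
  rw [support_map_getVert]
  exact List.mem_map_of_mem (List.mem_range.2 (by omega))

lemma getVert_inj {s t : V} {W : G.Walk s t} (hW : W.IsPath) {a b : ℕ}
    (ha : a ≤ W.length) (hb : b ≤ W.length) (h : W.getVert a = W.getVert b) : a = b := by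
  have hnodup := (SimpleGraph.Walk.isPath_def _).mp hW
  rw [support_map_getVert] at hnodup
  have h1 : a ∈ List.range (W.length + 1) := List.mem_range.2 (by omega)
  have h2 : b ∈ List.range (W.length + 1) := List.mem_range.2 (by omega)
  have := List.inj_on_of_nodup_map hnodup
  exact this h1 h2 h

lemma edge_getVert_mem {s t : V} (W : G.Walk s t) {n : ℕ} (h : n < W.length) :
    s(W.getVert n, W.getVert (n+1)) ∈ W.edges := by
  induction W generalizing n with
  | nil => simp at h
  | cons hadj p ih =>
    cases n with
    | zero =>
      cases p with
      | nil => simp [SimpleGraph.Walk.getVert]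
      | cons h' q => simp [SimpleGraph.Walk.getVert]
    | succ n =>
      simp only [SimpleGraph.Walk.length_cons] at h
      simp only [SimpleGraph.Walk.getVert_cons_succ, SimpleGraph.Walk.edges_cons]
      exact List.mem_cons_of_mem _ (ih (by omega))

lemma edges_mem_consecutive {s t : V} (W : G.Walk s t) {e : Sym2 V} (he : e ∈ W.edges) :
    ∃ n, n < W.length ∧ e = s(W.getVert n, W.getVert (n+1)) := by
  induction W with
  | nil => simp at he
  | cons hadj p ih =>
    rw [SimpleGraph.Walk.edges_cons, List.mem_cons] at he
    rcases he with he | he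
    · refine ⟨0, by simp, ?_⟩
      cases p <;> simpa [SimpleGraph.Walk.getVert] using he
    · obtain ⟨n, hn, hne⟩ := ih he
      exact ⟨n + 1, by simp; omega, by simpa [SimpleGraph.Walk.getVert_cons_succ]⟩


lemma dup_shorter [DecidableEq V] {s t : V} :
    ∀ (W : G.Walk s t), ¬ W.support.Nodup →
      ∃ D : G.Walk s t, D.length < W.length ∧ ∀ e ∈ D.edges, e ∈ W.edges := by
  intro W
  induction W with
  | nil => intro h; simp at h
  | @cons a b c hadj p ih =>
    intro h
    by_cases hs : a ∈ p.support
    · refine ⟨p.dropUntil _ hs, ?_, ?_⟩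
      · have := SimpleGraph.Walk.length_dropUntil_le p hs
        simp only [SimpleGraph.Walk.length_cons]; omega
      · intro e he
        have := SimpleGraph.Walk.edges_dropUntil_subset p hs he
        simp only [SimpleGraph.Walk.edges_cons]
        exact List.mem_cons_of_mem _ this
    · have hp : ¬ p.support.Nodup := by
        simp only [SimpleGraph.Walk.support_cons, List.nodup_cons] at h
        tauto
      obtain ⟨D, hD1, hD2⟩ := ih hp
      refine ⟨.cons hadj D, ?_, ?_⟩
      · simp only [SimpleGraph.Walk.length_cons]; omega
      · intro e he
        simp only [SimpleGraph.Walk.edges_cons, List.mem_cons] at he ⊢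
        tauto

lemma shorter_path_of_dup [DecidableEq V] {s t : V} (W : G.Walk s t)
    (h : ¬ W.support.Nodup) :
    ∃ D : G.Walk s t, D.IsPath ∧ D.length < W.length ∧ ∀ e ∈ D.edges, e ∈ W.edges := by
  obtain ⟨D, hD1, hD2⟩ := dup_shorter W h
  exact ⟨D.bypass, SimpleGraph.Walk.bypass_isPath D,
    lt_of_le_of_lt (SimpleGraph.Walk.length_bypass_le D) hD1,
    fun e he => hD2 e (SimpleGraph.Walk.edges_bypass_subset D he)⟩

lemma not_nodup_append {a b c : V} (W₁ : G.Walk a b) (W₂ : G.Walk b c) {x : V}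
    (h1 : x ∈ W₁.support) (h2 : x ∈ W₂.support) (hxb : x ≠ b) :
    ¬ (W₁.append W₂).support.Nodup := by
  rw [SimpleGraph.Walk.support_append, List.nodup_append]
  intro ⟨_, _, hdisj⟩
  have h2' : x ∈ W₂.support.tail := by
    rcases (SimpleGraph.Walk.mem_support_iff _).mp h2 with h | h
    · exact absurd h hxb
    · exact h
  exact hdisj x h1 x h2' rfl

/-- Decompose a walk at an edge. -/
lemma exists_decomp_at_edge {s t : V} {W : G.Walk s t} {e : Sym2 V} (he : e ∈ W.edges) :
    ∃ (a b : V) (hadj : G.Adj a b) (q1 : G.Walk s a) (q2 : G.Walk b t),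
      W = q1.append (SimpleGraph.Walk.cons hadj q2) ∧ e = s(a, b) := by
  induction W with
  | nil => simp at he
  | cons hadj p ih =>
    rw [SimpleGraph.Walk.edges_cons, List.mem_cons] at he
    rcases he with he | he
    · exact ⟨_, _, hadj, .nil, p, by simp, he⟩
    · obtain ⟨a, b, hab, q1, q2, hW, hee⟩ := ih he
      exact ⟨a, b, hab, .cons hadj q1, q2, by rw [SimpleGraph.Walk.cons_append, hW], hee⟩

/-- In a chain with no two consecutive elements in `I`, at least half the elements (rounded
up minus the end) are in `C`. -/
lemma chain_filter_length (p : V → Prop) [DecidablePred p] :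
    ∀ (N : ℕ) (l : List V), l.length ≤ N → l.Chain' G.Adj →
      (∀ x ∈ l, ∀ y ∈ l, ¬ p x → ¬ p y → ¬ G.Adj x y) →
      l.length ≤ 2 * (l.filter (fun v => p v)).length + 1 := by
  intro N
  induction N with
  | zero =>
    intro l hl _ _
    have : l = [] := List.length_eq_zero_iff.mp (by omega)
    subst this; simp
  | succ N ih =>
    intro l hl hchain hnadj
    match l with
    | [] => simp
    | [a] => simp
    | a :: b :: tl =>
      have hadj : G.Adj a b := (List.isChain_cons_cons.mp hchain).1
      have hchain' : (b :: tl).Chain' G.Adj := (List.isChain_cons_cons.mp hchain).2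
      by_cases hpa : p a
      · have := ih (b :: tl) (by simp at hl ⊢; omega) hchain'
          (fun x hx y hy => hnadj x (List.mem_cons_of_mem _ hx) y (List.mem_cons_of_mem _ hy))
        have hf : (a :: b :: tl).filter (fun v => p v) = a :: ((b :: tl).filter (fun v => p v)) :=
          List.filter_cons_of_pos (by simpa using hpa)
        rw [hf]
        simp only [List.length_cons] at *
        omega
      · have hpb : p b := by
          by_contra hpb
          exact hnadj a (by simp) b (by simp) hpa hpb hadj
        have := ih tl (by simp at hl ⊢; omega) hchain'.tail
          (fun x hx y hy => hnadj x (List.mem_cons_of_mem _ (List.mem_cons_of_mem _ hx)) y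
            (List.mem_cons_of_mem _ (List.mem_cons_of_mem _ hy)))
        have hf : (a :: b :: tl).filter (fun v => p v) = (b :: tl).filter (fun v => p v) :=
          List.filter_cons_of_neg (by simpa using hpa)
        have hf2 : (b :: tl).filter (fun v => p v) = b :: (tl.filter (fun v => p v)) :=
          List.filter_cons_of_pos (by simpa using hpb)
        rw [hf, hf2]
        simp only [List.length_cons] at *
        omega

variable {V : Type*} {G : SimpleGraph V} {k : ℕ} {X : Fin k → V × V}

lemma length_update (P : WalkFamily G X) (c : Fin k) (Wc : G.Walk (X c).1 (X c).2) (a : Fin k) :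
    ((Function.update P c Wc) a).length
      = Function.update (fun b => (P b).length) c Wc.length a := by
  rcases eq_or_ne a c with rfl | h
  · simp
  · simp [Function.update_of_ne h]

lemma sum_family_update (P : WalkFamily G X) (c : Fin k) (Wc : G.Walk (X c).1 (X c).2) :
    ∑ a, ((Function.update P c Wc) a).length
      = Wc.length + ∑ a ∈ Finset.univ \ {c}, (P a).length := by
  rw [Finset.sum_congr rfl fun a _ => length_update P c Wc a]
  exact Finset.sum_update_of_mem (Finset.mem_univ c) _ _

lemma sum_family_update2 (P : WalkFamily G X) {i j : Fin k} (hij : i ≠ j)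
    (Wi : G.Walk (X i).1 (X i).2) (Wj : G.Walk (X j).1 (X j).2) :
    ∑ a, ((Function.update (Function.update P i Wi) j Wj) a).length
      = Wj.length + (Wi.length + ∑ a ∈ (Finset.univ \ {j}) \ {i}, (P a).length) := by
  rw [Finset.sum_congr rfl fun a _ => length_update (Function.update P i Wi) j Wj a,
    Finset.sum_update_of_mem (Finset.mem_univ j)]
  congr 1
  rw [Finset.sum_congr rfl fun a _ => length_update P i Wi a]
  exact Finset.sum_update_of_mem (by simp [Finset.mem_sdiff, hij]) _ _

lemma sum_family_split (P : WalkFamily G X) {i j : Fin k} (hij : i ≠ j) :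
    ∑ a, (P a).length
      = (P j).length + ((P i).length + ∑ a ∈ (Finset.univ \ {j}) \ {i}, (P a).length) := by
  rw [Finset.sum_eq_add_sum_sdiff_singleton_of_mem (Finset.mem_univ j),
    Finset.sum_eq_add_sum_sdiff_singleton_of_mem (show i ∈ Finset.univ \ {j} by simp [hij])]

lemma update2_pairwise {P : WalkFamily G X} (hdis : PairwiseEdgeDisjoint G X P)
    {i j : Fin k} (hij : i ≠ j)
    {Wi : G.Walk (X i).1 (X i).2} {Wj : G.Walk (X j).1 (X j).2}
    (hsubi : ∀ e ∈ Wi.edges, e ∈ (P i).edges ∨ e ∈ (P j).edges)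
    (hsubj : ∀ e ∈ Wj.edges, e ∈ (P i).edges ∨ e ∈ (P j).edges)
    (hdisij : ∀ e ∈ Wi.edges, e ∉ Wj.edges) :
    PairwiseEdgeDisjoint G X (Function.update (Function.update P i Wi) j Wj) := by
  intro a b hab e hea heb
  rcases eq_or_ne a j with rfl | haj
  · rw [Function.update_self] at hea
    rcases eq_or_ne b i with rfl | hbi
    · rw [Function.update_of_ne hab.symm, Function.update_self] at heb
      exact hdisij e heb hea
    · rw [Function.update_of_ne hab.symm, Function.update_of_ne hbi] at heb
      rcases hsubj e hea with h | h
      · exact hdis i b hbi.symm e h heb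
      · exact hdis a b hab e h heb
  · rw [Function.update_of_ne haj] at hea
    rcases eq_or_ne a i with rfl | hai
    · rw [Function.update_self] at hea
      rcases eq_or_ne b j with rfl | hbj
      · rw [Function.update_self] at heb
        exact hdisij e hea heb
      · rw [Function.update_of_ne hbj, Function.update_of_ne hab.symm] at heb
        rcases hsubi e hea with h | h
        · exact hdis a b hab e h heb
        · exact hdis j b hbj.symm e h heb
    · rw [Function.update_of_ne hai] at hea
      rcases eq_or_ne b j with rfl | hbj
      · rw [Function.update_self] at heb
        rcases hsubj e heb with h | h
        · exact (hdis i a hai.symm e h hea).elim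
        · exact (hdis b a hab.symm e h hea).elim
      · rw [Function.update_of_ne hbj] at heb
        rcases eq_or_ne b i with rfl | hbi
        · rw [Function.update_self] at heb
          rcases hsubi e heb with h | h
          · exact (hdis b a hab.symm e h hea).elim
          · exact (hdis j a haj.symm e h hea).elim
        · rw [Function.update_of_ne hbi] at heb
          exact hdis a b hab e hea heb


lemma split3 {s t : V} (W : G.Walk s t) (α β : ℕ) :
    W.edges = (wtake W α).edges ++
      ((wtake (wdrop W α) (β - α)).edges ++ (wdrop (wdrop W α) (β - α)).edges) := by
  conv_lhs => rw [← wtake_append_wdrop W α]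
  rw [SimpleGraph.Walk.edges_append]
  congr 1
  conv_lhs => rw [← wtake_append_wdrop (wdrop W α) (β - α)]
  rw [SimpleGraph.Walk.edges_append]

lemma shortcut {s t : V} {W : G.Walk s t} (hW : W.IsPath) {α β : ℕ} (hαβ : α < β)
    (hβ : β ≤ W.length) (hadj : G.Adj (W.getVert α) (W.getVert β)) :
    ∃ newP : G.Walk s t,
      newP.IsPath ∧
      newP.length + β = W.length + 1 + α ∧
      newP.edges = (wtake W α).edges ++
        (s(W.getVert α, W.getVert β) :: (wdrop (wdrop W α) (β - α)).edges) := by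
  have hα : α ≤ W.length := by omega
  have hRlen : (wdrop W α).length = W.length - α := length_wdrop W hα
  have hδR : β - α ≤ (wdrop W α).length := by omega
  have hBw : (wdrop W α).getVert (β - α) = W.getVert β := by
    rw [getVert_wdrop]; congr 1; omega
  have hadj' : G.Adj (W.getVert α) ((wdrop W α).getVert (β - α)) := by
    rw [hBw]; exact hadj
  refine ⟨(wtake W α).append (SimpleGraph.Walk.cons hadj'
      (wdrop (wdrop W α) (β - α))), ?_, ?_, ?_⟩
  · rw [SimpleGraph.Walk.isPath_def, SimpleGraph.Walk.support_append,
      SimpleGraph.Walk.support_cons, List.tail_cons,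
      support_wdrop _ hδR, support_wdrop _ hα, List.drop_drop, support_wtake _ hα]
    have hβα : α + (β - α) = β := by omega
    rw [hβα]
    have hsub : List.Sublist (List.take (α + 1) W.support ++ List.drop β W.support) W.support := by
      conv_rhs => rw [← List.take_append_drop (α + 1) W.support]
      refine List.Sublist.append_left ?_ _
      have : List.drop β W.support = List.drop (β - (α + 1)) (List.drop (α + 1) W.support) := by
        rw [List.drop_drop]; congr 1; omega
      rw [this]
      exact List.drop_sublist _ _
    exact hsub.nodup ((SimpleGraph.Walk.isPath_def _).mp hW)
  · rw [SimpleGraph.Walk.length_append, SimpleGraph.Walk.length_cons,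
      length_wtake _ hα, length_wdrop _ hδR, hRlen]
    omega
  · rw [SimpleGraph.Walk.edges_append, SimpleGraph.Walk.edges_cons]
    exact congrArg₂ _ rfl (congrArg₂ _ (by rw [hBw]) rfl)


lemma exists_user {P : WalkFamily G X} (hP : IsMinEDPSolution G X P) (i : Fin k)
    {α β : ℕ} (hαβ : α < β) (hβ : β ≤ (P i).length)
    (hadj : G.Adj ((P i).getVert α) ((P i).getVert β)) :
    ∃ j : Fin k, s((P i).getVert α, (P i).getVert β) ∈ (P j).edges := by
  classical
  by_contra hcon
  push_neg at hcon
  have hne : β ≠ α + 1 := by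
    intro h
    subst h
    exact hcon i (edge_getVert_mem (P i) (by omega))
  obtain ⟨newP, hpath, hlen, hedges⟩ := shortcut (hP.1.1 i) hαβ hβ hadj
  have hfacts := split3 (P i) α β
  have hsubW : ∀ e ∈ newP.edges, e ∈ (P i).edges ∨ e = s((P i).getVert α, (P i).getVert β) := by
    intro e he
    rw [hedges, List.mem_append, List.mem_cons] at he
    rcases he with h | h | h
    · exact Or.inl (by rw [hfacts]; exact List.mem_append_left _ h)
    · exact Or.inr h
    · exact Or.inl (by
        rw [hfacts]
        exact List.mem_append_right _ (List.mem_append_right _ h))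
  set T := Function.update P i newP with hT
  have hTsol : IsEDPSolution G X T := by
    constructor
    · intro a
      rcases eq_or_ne a i with rfl | ha
      · rw [hT, Function.update_self]; exact hpath
      · rw [hT, Function.update_of_ne ha]; exact hP.1.1 a
    · intro a b hab e hea heb
      rcases eq_or_ne a i with rfl | hai
      · rw [hT, Function.update_self] at hea
        rw [hT, Function.update_of_ne hab.symm] at heb
        rcases hsubW e hea with h | rfl
        · exact hP.1.2 a b hab e h heb
        · exact hcon b heb
      · rw [hT, Function.update_of_ne hai] at hea
        rcases eq_or_ne b i with rfl | hbi
        · rw [hT, Function.update_self] at heb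
          rcases hsubW e heb with h | rfl
          · exact hP.1.2 a b hab e hea h
          · exact hcon a hea
        · rw [hT, Function.update_of_ne hbi] at heb
          exact hP.1.2 a b hab e hea heb
  have hle := hP.2 T hTsol
  rw [hT, sum_family_update P i newP] at hle
  rw [Finset.sum_eq_add_sum_sdiff_singleton_of_mem (Finset.mem_univ i)
    (fun a => (P a).length)] at hle
  omega

lemma no_double {P : WalkFamily G X} (hP : IsMinEDPSolution G X P) {i j : Fin k} (hij : j ≠ i)
    {α γ β : ℕ} (hαγ : α < γ) (hγβ : γ < β) (hβ : β ≤ (P i).length)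
    (he : s((P i).getVert α, (P i).getVert β) ∈ (P j).edges)
    (hxQ : (P i).getVert γ ∈ (P j).support) : False := by
  classical
  have hWpath : (P i).IsPath := hP.1.1 i
  have hQpath : (P j).IsPath := hP.1.1 j
  have hαβ : α < β := by omega
  have hadj : G.Adj ((P i).getVert α) ((P i).getVert β) := (P j).adj_of_mem_edges he
  have hα : α ≤ (P i).length := by omega
  have hγ : γ ≤ (P i).length := by omega
  have hRlen : (wdrop (P i) α).length = (P i).length - α := length_wdrop _ hα
  have hδR : β - α ≤ (wdrop (P i) α).length := by omega
  have hγδ : γ - α ≤ β - α := by omega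
  set S := wtake (wdrop (P i) α) (β - α) with hS
  have hSlen : S.length = β - α := length_wtake _ hδR
  have hSend : (wdrop (P i) α).getVert (β - α) = (P i).getVert β := by
    rw [getVert_wdrop]; congr 1; omega
  have hxS : (P i).getVert γ ∈ S.support := by
    have h1 : S.getVert (γ - α) = (P i).getVert γ := by
      rw [hS, getVert_wtake _ hγδ, getVert_wdrop]; congr 1; omega
    rw [← h1]
    exact getVert_mem_support S (by omega)
  have hxu : (P i).getVert γ ≠ (P i).getVert α := fun h => by
    have := getVert_inj hWpath hγ hα h; omega
  have hxw : (P i).getVert γ ≠ (P i).getVert β := fun h => by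
    have := getVert_inj hWpath hγ hβ h; omega
  have hWsplit := split3 (P i) α β
  have hWnodupE : (P i).edges.Nodup := hWpath.isTrail.edges_nodup
  have heW : s((P i).getVert α, (P i).getVert β) ∉ (P i).edges :=
    fun h => hP.1.2 j i hij _ he h
  obtain ⟨newP, hnewPpath, hnewPlen, hnewPedges⟩ := shortcut hWpath hαβ hβ hadj
  -- disjointness inside the edges of (P i)
  have hWnodup2 : ((wtake (P i) α).edges ++
      (S.edges ++ (wdrop (wdrop (P i) α) (β - α)).edges)).Nodup := by
    rw [hS, ← hWsplit]; exact hWnodupE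
  have hAS : ∀ e', e' ∈ (wtake (P i) α).edges → e' ∈ S.edges → False := by
    intro e' h1 h2
    exact (List.nodup_append.mp hWnodup2).2.2 e' h1 e' (List.mem_append_left _ h2) rfl
  have hBS : ∀ e', e' ∈ (wdrop (wdrop (P i) α) (β - α)).edges → e' ∈ S.edges → False := by
    intro e' h1 h2
    exact (List.nodup_append.mp (List.nodup_append.mp hWnodup2).2.1).2.2 e' h2 e' h1 rfl
  have hSW : ∀ e', e' ∈ S.edges → e' ∈ (P i).edges := by
    intro e' h1
    rw [hWsplit]
    exact List.mem_append_right _ (List.mem_append_left _ h1)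
  -- decompose (P j) at the edge
  obtain ⟨a, b, hab, q1, q2, hQeq, hee⟩ := exists_decomp_at_edge he
  have hQedges : (P j).edges = q1.edges ++ (s(a, b) :: q2.edges) := by
    rw [hQeq, SimpleGraph.Walk.edges_append, SimpleGraph.Walk.edges_cons]
  have hq1Q : ∀ e', e' ∈ q1.edges → e' ∈ (P j).edges := by
    intro e' h; rw [hQedges]; exact List.mem_append_left _ h
  have hq2Q : ∀ e', e' ∈ q2.edges → e' ∈ (P j).edges := by
    intro e' h; rw [hQedges]; exact List.mem_append_right _ (List.mem_cons_of_mem _ h)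
  have hQnodupE : (P j).edges.Nodup := hQpath.isTrail.edges_nodup
  have habq : s(a, b) ∉ q1.edges ∧ s(a, b) ∉ q2.edges := by
    rw [hQedges] at hQnodupE
    obtain ⟨h1, h2, h3⟩ := List.nodup_append.mp hQnodupE
    exact ⟨fun h => h3 _ h _ List.mem_cons_self rfl, (List.nodup_cons.mp h2).1⟩
  have hQlen : (P j).length = q1.length + (1 + q2.length) := by
    rw [hQeq, SimpleGraph.Walk.length_append, SimpleGraph.Walk.length_cons]; omega
  have hQsup : (P i).getVert γ ∈ q1.support ∨ (P i).getVert γ ∈ q2.support := by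
    have := hxQ
    rw [hQeq, SimpleGraph.Walk.mem_support_append_iff, SimpleGraph.Walk.support_cons] at this
    rcases this with h | h
    · exact Or.inl h
    · rcases List.mem_cons.mp (by simpa using h) with h' | h'
      · exact Or.inl (by rw [h']; exact SimpleGraph.Walk.end_mem_support q1)
      · exact Or.inr h'
  have hxab : (P i).getVert γ ≠ a ∧ (P i).getVert γ ≠ b := by
    rcases Sym2.eq_iff.mp hee with ⟨h1, h2⟩ | ⟨h1, h2⟩
    · rw [← h1, ← h2]; exact ⟨hxu, hxw⟩
    · rw [← h1, ← h2]; exact ⟨hxw, hxu⟩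
  -- the main argument, uniform in the orientation of the edge inside (P j)
  have main : ∀ mid : G.Walk a b,
      (∀ e', e' ∈ mid.edges ↔ e' ∈ S.edges) → mid.length = β - α →
      (P i).getVert γ ∈ mid.support → False := by
    intro mid hmidE hmidL hxmid
    set Wnew := q1.append (mid.append q2) with hWnew
    have hdup : ¬ Wnew.support.Nodup := by
      rw [hWnew]
      rcases hQsup with hx1 | hx2
      · exact not_nodup_append q1 (mid.append q2) hx1
          (by rw [SimpleGraph.Walk.mem_support_append_iff]; exact Or.inl hxmid)
          hxab.1
      · rw [SimpleGraph.Walk.append_assoc]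
        exact not_nodup_append (q1.append mid) q2
          (by rw [SimpleGraph.Walk.mem_support_append_iff]; exact Or.inr hxmid)
          hx2 hxab.2
    obtain ⟨D, hDpath, hDlen, hDE⟩ := shorter_path_of_dup Wnew hdup
    have hWnewlen : Wnew.length = q1.length + ((β - α) + q2.length) := by
      rw [hWnew, SimpleGraph.Walk.length_append, SimpleGraph.Walk.length_append, hmidL]
    have hDE' : ∀ e', e' ∈ D.edges →
        e' ∈ q1.edges ∨ e' ∈ mid.edges ∨ e' ∈ q2.edges := by
      intro e' h
      have := hDE e' h
      rw [hWnew, SimpleGraph.Walk.edges_append, SimpleGraph.Walk.edges_append] at this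
      simpa using this
    have hnewPmem : ∀ e', e' ∈ newP.edges →
        e' ∈ (wtake (P i) α).edges ∨ e' = s((P i).getVert α, (P i).getVert β) ∨
          e' ∈ (wdrop (wdrop (P i) α) (β - α)).edges := by
      intro e' h
      rw [hnewPedges] at h
      simpa using h
    -- the modified family
    have hsol : IsEDPSolution G X
        (Function.update (Function.update P i newP) j D) := by
      constructor
      · intro c
        rcases eq_or_ne c j with rfl | hcj
        · rw [Function.update_self]; exact hDpath
        · rw [Function.update_of_ne hcj]
          rcases eq_or_ne c i with rfl | hci
          · rw [Function.update_self]; exact hnewPpath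
          · rw [Function.update_of_ne hci]; exact hP.1.1 c
      · refine update2_pairwise hP.1.2 (Ne.symm hij) ?_ ?_ ?_
        · intro e' h
          rcases hnewPmem e' h with h | h | h
          · exact Or.inl (by rw [hWsplit]; exact List.mem_append_left _ h)
          · exact Or.inr (by rw [h]; exact he)
          · exact Or.inl (by
              rw [hWsplit]
              exact List.mem_append_right _ (List.mem_append_right _ h))
        · intro e' h
          rcases hDE' e' h with h | h | h
          · exact Or.inr (hq1Q e' h)
          · exact Or.inl (hSW e' ((hmidE e').mp h))
          · exact Or.inr (hq2Q e' h)
        · intro e' h1 h2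
          rcases hnewPmem e' h1 with h | h | h
          · rcases hDE' e' h2 with h' | h' | h'
            · exact hP.1.2 j i hij e' (hq1Q e' h') (by
                rw [hWsplit]; exact List.mem_append_left _ h)
            · exact hAS e' h ((hmidE e').mp h')
            · exact hP.1.2 j i hij e' (hq2Q e' h') (by
                rw [hWsplit]; exact List.mem_append_left _ h)
          · rcases hDE' e' h2 with h' | h' | h'
            · exact habq.1 (by rw [← hee, ← h]; exact h')
            · exact heW (by rw [← h]; exact hSW e' ((hmidE e').mp h'))
            · exact habq.2 (by rw [← hee, ← h]; exact h')
          · rcases hDE' e' h2 with h' | h' | h'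
            · exact hP.1.2 j i hij e' (hq1Q e' h') (by
                rw [hWsplit]
                exact List.mem_append_right _ (List.mem_append_right _ h))
            · exact hBS e' h ((hmidE e').mp h')
            · exact hP.1.2 j i hij e' (hq2Q e' h') (by
                rw [hWsplit]
                exact List.mem_append_right _ (List.mem_append_right _ h))
    have hle := hP.2 _ hsol
    rw [sum_family_update2 P (Ne.symm hij) newP D] at hle
    rw [sum_family_split P (Ne.symm hij)] at hle
    omega
  -- instantiate the two orientations
  rcases Sym2.eq_iff.mp hee with ⟨h1, h2⟩ | ⟨h1, h2⟩
  · subst h1; subst h2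
    refine main (S.copy rfl hSend) ?_ ?_ ?_
    · intro e'; rw [SimpleGraph.Walk.edges_copy]
    · rw [SimpleGraph.Walk.length_copy, hSlen]
    · rw [SimpleGraph.Walk.support_copy]; exact hxS
  · subst h1; subst h2
    refine main (S.copy rfl hSend).reverse ?_ ?_ ?_
    · intro e'
      rw [SimpleGraph.Walk.edges_reverse, List.mem_reverse, SimpleGraph.Walk.edges_copy]
    · rw [SimpleGraph.Walk.length_reverse, SimpleGraph.Walk.length_copy, hSlen]
    · rw [SimpleGraph.Walk.support_reverse, List.mem_reverse,
        SimpleGraph.Walk.support_copy]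
      exact hxS

end EDPAux

/-- Let `k > 8` with `k^(1/4)` a natural number. Then every path of a minimum
EDP solution of a Yes-instance on a split graph with `k` terminal pairs has length
less than `4√k + 4`. -/
theorem min_edp_solution_path_length {V : Type*} [Fintype V] (G : SimpleGraph V)
    (C I : Finset V) (hsplit : IsSplitPartition G C I)
    {k : ℕ} (hk : 8 < k) (hquartic : ∃ m : ℕ, m ^ 4 = k)
    (X : Fin k → V × V) (hX : ∀ i, (X i).1 ≠ (X i).2)
    (P : WalkFamily G X) (hP : IsMinEDPSolution G X P) (i : Fin k) :
    ((P i).length : ℝ) < 4 * Real.sqrt k + 4 := by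
  classical
  open EDPAux in
  obtain ⟨m, hm⟩ := hquartic
  have hm2 : 2 ≤ m := by
    by_contra h
    push_neg at h
    have h14 : m ^ 4 ≤ 1 ^ 4 := Nat.pow_le_pow_left (by omega) 4
    rw [one_pow] at h14
    omega
  set N := m ^ 2 with hN
  have hkN : k = N * N := by rw [hN, ← hm]; ring
  have hsqrt : Real.sqrt k = (N : ℝ) := by
    have h1 : ((k : ℕ) : ℝ) = ((N : ℝ)) ^ 2 := by rw [hkN]; push_cast; ring
    rw [h1, Real.sqrt_sq (by positivity)]
  by_contra hlen
  push_neg at hlen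
  have hWpath : (P i).IsPath := hP.1.1 i
  set n := (P i).length with hn'
  have hn : 4 * N + 4 ≤ n := by
    rw [hsqrt] at hlen
    have h2 : ((4 * N + 4 : ℕ) : ℝ) ≤ ((n : ℕ) : ℝ) := by push_cast; linarith
    exact_mod_cast h2
  -- the list of indices of clique vertices along the path (P i)
  set idx := (List.range (n + 1)).filter (fun t => decide ((P i).getVert t ∈ C)) with hidx
  set L := idx.length with hL
  have hL2 : 2 * N + 2 ≤ L := by
    have hchain : List.Chain' G.Adj (P i).support := SimpleGraph.Walk.isChain_adj_support _
    have hhalf := chain_filter_length (G := G) (fun v => v ∈ C) (P i).support.length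
      (P i).support le_rfl hchain
      (fun x _ y _ hx hy hadj => by
        rcases hsplit.1 x with h | h
        · exact hx h
        rcases hsplit.1 y with h' | h'
        · exact hy h'
        exact hsplit.2.2.2 x h y h' hadj)
    have hsuplen : (P i).support.length = n + 1 := by
      rw [SimpleGraph.Walk.length_support]
    have hfilter_eq :
        ((P i).support.filter (fun v => decide (v ∈ C))).length = L := by
      rw [hL, hidx, support_map_getVert (P i), List.filter_map, List.length_map]
      rfl
    rw [hsuplen, hfilter_eq] at hhalf
    omega
  have hsorted : idx.Pairwise (· < ·) := (List.pairwise_lt_range (n := n + 1)).filter _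
  have hmem : ∀ t ∈ idx, t ≤ n ∧ (P i).getVert t ∈ C := by
    intro t ht
    rw [hidx, List.mem_filter, List.mem_range] at ht
    exact ⟨by omega, by simpa using ht.2⟩
  have hlowlt : ∀ a : Fin (N + 1), (a : ℕ) < L := by
    intro a; have := a.isLt; omega
  have hhighlt : ∀ b : Fin (N + 1), L - (N + 1) + (b : ℕ) < L := by
    intro b; have := b.isLt; omega
  set lo : Fin (N + 1) → ℕ := fun a => idx.get ⟨a, hlowlt a⟩ with hlo
  set hi : Fin (N + 1) → ℕ := fun b => idx.get ⟨L - (N + 1) + b, hhighlt b⟩ with hhi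
  have hgetmono : ∀ (i1 i2 : Fin L), (i1 : ℕ) < (i2 : ℕ) → idx.get i1 < idx.get i2 :=
    fun i1 i2 h => List.pairwise_iff_get.mp hsorted i1 i2 h
  have hlomem : ∀ a : Fin (N + 1), lo a ≤ n ∧ (P i).getVert (lo a) ∈ C :=
    fun a => hmem _ (idx.get_mem _)
  have hhimem : ∀ b : Fin (N + 1), hi b ≤ n ∧ (P i).getVert (hi b) ∈ C :=
    fun b => hmem _ (idx.get_mem _)
  have hlohi : ∀ a b : Fin (N + 1), lo a < hi b := by
    intro a b
    refine hgetmono _ _ ?_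
    have := a.isLt; have := b.isLt
    simp only []
    omega
  have hadjC : ∀ a b : Fin (N + 1),
      G.Adj ((P i).getVert (lo a)) ((P i).getVert (hi b)) := by
    intro a b
    refine hsplit.2.2.1 _ (hlomem a).2 _ (hhimem b).2 ?_
    intro h
    have := getVert_inj hWpath (hlomem a).1 (hhimem b).1 h
    have := hlohi a b
    omega
  set F : Fin (N + 1) × Fin (N + 1) → Fin k := fun p =>
    Classical.choose (exists_user hP i (hlohi p.1 p.2) (hhimem p.2).1 (hadjC p.1 p.2))
    with hF
  have hFspec : ∀ p : Fin (N + 1) × Fin (N + 1),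
      s((P i).getVert (lo p.1), (P i).getVert (hi p.2)) ∈ (P (F p)).edges :=
    fun p => Classical.choose_spec
      (exists_user hP i (hlohi p.1 p.2) (hhimem p.2).1 (hadjC p.1 p.2))
  have hloinj : ∀ a a' : Fin (N + 1), lo a = lo a' → a = a' := by
    intro a a' h
    by_contra hne
    rcases Ne.lt_or_gt (fun h' : (a : ℕ) = (a' : ℕ) => hne (Fin.ext h')) with h' | h'
    · exact absurd h (Nat.ne_of_lt (hgetmono _ _ h'))
    · exact absurd h.symm (Nat.ne_of_lt (hgetmono _ _ h'))
  have hhiinj : ∀ b b' : Fin (N + 1), hi b = hi b' → b = b' := by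
    intro b b' h
    by_contra hne
    have hbb : (b : ℕ) ≠ (b' : ℕ) := fun h' => hne (Fin.ext h')
    rcases Ne.lt_or_gt hbb with h' | h'
    · exact absurd h (Nat.ne_of_lt (hgetmono _ _ (by simp only []; omega)))
    · exact absurd h.symm (Nat.ne_of_lt (hgetmono _ _ (by simp only []; omega)))
  have hinj : Function.Injective F := by
    intro p p' hpp
    have he₁ := hFspec p
    have he₂ := hFspec p'
    rw [← hpp] at he₂
    by_cases hj0 : F p = i
    · rw [hj0] at he₁ he₂
      have hcons : ∀ α' β' : ℕ, α' < β' → β' ≤ n →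
          s((P i).getVert α', (P i).getVert β') ∈ (P i).edges → β' = α' + 1 := by
        intro α' β' h1 h2 hmem'
        obtain ⟨t, ht, hte⟩ := edges_mem_consecutive (P i) hmem'
        rcases Sym2.eq_iff.mp hte with ⟨ha', hb'⟩ | ⟨ha', hb'⟩
        · have h3 := getVert_inj hWpath (by omega) (by omega) ha'
          have h4 := getVert_inj hWpath h2 (by omega) hb'
          omega
        · have h3 := getVert_inj hWpath (by omega) (by omega) ha'
          have h4 := getVert_inj hWpath h2 (by omega) hb'
          omega
      have key : ∀ a b : Fin (N + 1), hi b = lo a + 1 →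
          (a : ℕ) = N ∧ (b : ℕ) + (L - (N + 1)) = N + 1 := by
        intro a b hab
        have hia := a.isLt; have hib := b.isLt
        by_cases h2 : L - (N + 1) + (b : ℕ) = (a : ℕ) + 1
        · omega
        · exfalso
          have h3 : (a : ℕ) + 1 < L - (N + 1) + (b : ℕ) := by
            have := hlohi a b; omega
          have h4 : (a : ℕ) + 1 < L := by omega
          have g1 := hgetmono ⟨a, hlowlt a⟩ ⟨(a : ℕ) + 1, h4⟩ (by simp)
          have g2 := hgetmono ⟨(a : ℕ) + 1, h4⟩ ⟨L - (N + 1) + (b : ℕ), hhighlt b⟩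
            (by simpa using h3)
          simp only [hlo, hhi] at hab
          omega
      have k1 := key p.1 p.2 (hcons _ _ (hlohi p.1 p.2) (hhimem p.2).1 he₁)
      have k2 := key p'.1 p'.2 (hcons _ _ (hlohi p'.1 p'.2) (hhimem p'.2).1 he₂)
      have : p.1 = p'.1 := Fin.ext (by omega)
      have : p.2 = p'.2 := Fin.ext (by omega)
      exact Prod.ext ‹p.1 = p'.1› ‹p.2 = p'.2›
    · -- two distinct crossing edges on the path (P (F p)) ≠ (P i)
      rcases lt_trichotomy (lo p.1) (lo p'.1) with h | h | h
      · exact absurd (no_double hP hj0 h (hlohi p'.1 p.2) (hhimem p.2).1 he₁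
          (SimpleGraph.Walk.fst_mem_support_of_mem_edges _ he₂)) not_false
      · rcases lt_trichotomy (hi p.2) (hi p'.2) with h2 | h2 | h2
        · rw [← h] at he₂
          exact absurd (no_double hP hj0 (hlohi p.1 p.2) h2 (hhimem p'.2).1 he₂
            (SimpleGraph.Walk.snd_mem_support_of_mem_edges _ he₁)) not_false
        · have e1 : p.1 = p'.1 := hloinj _ _ h
          have e2 : p.2 = p'.2 := hhiinj _ _ h2
          exact Prod.ext e1 e2
        · rw [← h] at he₂
          exact absurd (no_double hP hj0 (hlohi p.1 p'.2) h2 (hhimem p.2).1 he₁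
            (SimpleGraph.Walk.snd_mem_support_of_mem_edges _ he₂)) not_false
      · exact absurd (no_double hP hj0 h (hlohi p.1 p'.2) (hhimem p'.2).1 he₂
          (SimpleGraph.Walk.fst_mem_support_of_mem_edges _ he₁)) not_false
  have hcard := Fintype.card_le_of_injective F hinj
  rw [Fintype.card_prod, Fintype.card_fin, Fintype.card_fin] at hcard
  have hexp : (N + 1) * (N + 1) = N * N + 2 * N + 1 := by ring
  omega
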